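/- Visser's ADN theorem: Let γ be a precomplete numbering of a set S, and suppose δ : ℕ ⇀ ℕ is a partial computable diagonal function for γ. Then for every partial computable function ψ : ℕ ⇀ ℕ there exists a total computable function f : ℕ → ℕ such that for every n: (1) if ψ(n) is defined then f(n) ~γ ψ(n), and (2) if ψ(n) is undefined then δ(f(n)) is undefined (we say f totalizes ψ avoiding δ). -/

import Mathlib

/-- A numbering `γ : ℕ → S` (a surjection) is precomplete if every partial computable
function can be totalized modulo `~γ`. -/
def Precomplete {S : Type*} (γ : ℕ → S) : Prop :=
  ∀ ψ : ℕ →. ℕ, Nat.Partrec ψ →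
    ∃ f : ℕ → ℕ, Computable f ∧ ∀ n : ℕ, ∀ y ∈ ψ n, γ (f n) = γ y

/-- A partial function `δ` is a diagonal function for the numbering `γ` if
`δ(x) ≁γ x` for every `x` in the domain of `δ`. -/
def DiagonalFn {S : Type*} (γ : ℕ → S) (δ : ℕ →. ℕ) : Prop :=
  ∀ x : ℕ, ∀ y ∈ δ x, γ y ≠ γ x

/-- Visser's ADN theorem: given a precomplete numbering `γ` and a partial computable
diagonal function `δ` for `γ`, every partial computable `ψ` can be totalized avoiding `δ`. -/
theorem visser_ADN {S : Type*} (γ : ℕ → S) (hsurj : Function.Surjective γ)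
    (hpre : Precomplete γ) (δ : ℕ →. ℕ) (hδ : Nat.Partrec δ) (hdiag : DiagonalFn γ δ)
    (ψ : ℕ →. ℕ) (hψ : Nat.Partrec ψ) :
    ∃ f : ℕ → ℕ, Computable f ∧
      (∀ n : ℕ, ∀ y ∈ ψ n, γ (f n) = γ y) ∧
      (∀ n : ℕ, ¬ (ψ n).Dom → ¬ (δ (f n)).Dom) := by
  classical
  -- the universal partial function on coded pairs
  set Φ : ℕ →. ℕ := fun p =>
    Nat.Partrec.Code.eval (Denumerable.ofNat Nat.Partrec.Code p.unpair.1) p.unpair.2 with hΦdef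
  have hΦ : Nat.Partrec Φ := by
    rw [← Partrec.nat_iff]
    exact Nat.Partrec.Code.eval_part.comp
      ((Computable.ofNat _).comp (Computable.fst.comp Computable.unpair))
      (Computable.snd.comp Computable.unpair)
  -- totalize it via precompleteness
  obtain ⟨F, hF, hFspec⟩ := hpre Φ hΦ
  -- the two racers: ψ on the second coordinate, and δ applied to the totalizer
  have hA : Nat.Partrec (fun p => ψ p.unpair.2) := by
    refine Partrec.nat_iff.1 ?_
    exact (Partrec.nat_iff.2 hψ).comp (Computable.snd.comp Computable.unpair)
  have hB : Nat.Partrec (fun p => δ (F p)) := by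
    refine Partrec.nat_iff.1 ?_
    exact (Partrec.nat_iff.2 hδ).comp hF
  obtain ⟨h, hh, hhspec⟩ := Nat.Partrec.merge' hA hB
  -- Kleene fixed point
  obtain ⟨c, hc⟩ := Nat.Partrec.Code.fixed_point₂
    (f := fun c n => h (Nat.pair (Encodable.encode c) n))
    ((Partrec.nat_iff.2 hh).comp
      (Primrec₂.natPair.to_comp.comp (Computable.encode.comp Computable.fst) Computable.snd))
  set f : ℕ → ℕ := fun n => F (Nat.pair (Encodable.encode c) n) with hfdef
  have hfc : Computable f :=
    hF.comp (Primrec₂.natPair.to_comp.comp (Computable.const _) Computable.id)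
  have key : ∀ n, Φ (Nat.pair (Encodable.encode c) n) = h (Nat.pair (Encodable.encode c) n) := by
    intro n
    have := congrFun hc n
    simpa [hΦdef, Nat.unpair_pair, Denumerable.ofNat_encode] using this
  refine ⟨f, hfc, ?_, ?_⟩
  · intro n y hy
    set p := Nat.pair (Encodable.encode c) n with hp
    have hdom : (h p).Dom := by
      rw [(hhspec p).2]
      left
      simpa [hp, Nat.unpair_pair] using Part.dom_iff_mem.2 ⟨y, hy⟩
    have hv : (h p).get hdom ∈ h p := Part.get_mem hdom
    have hγ : γ (f n) = γ ((h p).get hdom) := hFspec p _ ((key n).symm ▸ hv)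
    rcases (hhspec p).1 _ hv with hvy | hvδ
    · simp only [hp, Nat.unpair_pair] at hvy
      rw [hγ, Part.mem_unique hvy hy]
    · exact absurd hγ.symm (hdiag (F p) _ hvδ)
  · intro n hn hd
    set p := Nat.pair (Encodable.encode c) n with hp
    have hdom : (h p).Dom := by
      rw [(hhspec p).2]; right; exact hd
    have hv : (h p).get hdom ∈ h p := Part.get_mem hdom
    have hγ : γ (f n) = γ ((h p).get hdom) := hFspec p _ ((key n).symm ▸ hv)
    rcases (hhspec p).1 _ hv with hvy | hvδ
    · simp only [hp, Nat.unpair_pair] at hvy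
      exact hn (Part.dom_iff_mem.2 ⟨_, hvy⟩)
    · exact absurd hγ.symm (hdiag (F p) _ hvδ)
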